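/- Let G be a finite group, H a subgroup of G, and V a finite-dimensional complex representation of G equipped with a G/H-grading, i.e., an internal direct sum decomposition V = ⊕_{x ∈ G/H} V_x into complex subspaces such that g · V_x = V_{gx} for every g ∈ G and every coset x ∈ G/H. If V is nonzero and irreducible as a representation of G (its only G-invariant subspaces are 0 and V), then the component V_{1H} at the identity coset is nonzero, is invariant under the action of H, and is irreducible as a representation of H (its only H-invariant subspaces are 0 and V_{1H}). -/
import Mathlib


/-- Let `G` be a finite group, `H ≤ G`, and `V` a nonzero finite-dimensional complex
representation of `G` with a `G/H`-grading `W : G ⧸ H → Submodule ℂ V` satisfying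
`g • W x = W (g • x)`.  If `V` is irreducible as a `G`-representation, then the component
at the identity coset is nonzero, is `H`-invariant, and is irreducible as an
`H`-representation. -/
theorem graded_irreducible_component
    {G V : Type*} [Group G] [Finite G] [AddCommGroup V] [Module ℂ V]
    [FiniteDimensional ℂ V] (H : Subgroup G) [DecidableEq (G ⧸ H)]
    (ρ : Representation ℂ G V)
    (W : G ⧸ H → Submodule ℂ V)
    (hinternal : DirectSum.IsInternal W)
    (hgrade : ∀ (g : G) (x : G ⧸ H), (W x).map (ρ g) = W (g • x))
    (hV : Nontrivial V)
    (hirr : ∀ U : Submodule ℂ V, (∀ g : G, U.map (ρ g) ≤ U) → U = ⊥ ∨ U = ⊤) :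
    W ((1 : G) : G ⧸ H) ≠ ⊥ ∧
    (∀ h : G, h ∈ H → (W ((1 : G) : G ⧸ H)).map (ρ h) = W ((1 : G) : G ⧸ H)) ∧
    (∀ U : Submodule ℂ V, U ≤ W ((1 : G) : G ⧸ H) →
      (∀ h : G, h ∈ H → U.map (ρ h) ≤ U) → U = ⊥ ∨ U = W ((1 : G) : G ⧸ H)) := by
  -- the identity coset
  set x₀ : G ⧸ H := ((1 : G) : G ⧸ H) with hx₀
  have hsmul : ∀ g : G, g • x₀ = ((g : G ⧸ H)) := by
    intro g
    have h1 : g • ((1 : G) : G ⧸ H) = ((g * 1 : G) : G ⧸ H) := rfl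
    rw [hx₀, h1, mul_one]
  have hmem : ∀ h : G, h ∈ H → h • x₀ = x₀ := by
    intro h hh
    rw [hsmul, hx₀]
    exact QuotientGroup.eq.2 (by simpa using inv_mem hh)
  -- H-invariance
  have hinv : ∀ h : G, h ∈ H → (W x₀).map (ρ h) = W x₀ := by
    intro h hh
    rw [hgrade, hmem h hh]
  -- nonzero
  have hne : W x₀ ≠ ⊥ := by
    intro hbot
    have hall : ∀ x : G ⧸ H, W x = ⊥ := by
      intro x
      induction x using QuotientGroup.induction_on with
      | H g =>
        rw [← hsmul g, ← hgrade, hbot, Submodule.map_bot]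
    have htop := hinternal.submodule_iSup_eq_top
    have hb : iSup W = (⊥ : Submodule ℂ V) := le_bot_iff.1 (iSup_le fun x => (hall x).le)
    rw [hb] at htop
    obtain ⟨a, b, hab⟩ := hV
    apply hab
    have ha : a ∈ (⊥ : Submodule ℂ V) := htop ▸ Submodule.mem_top
    have hb2 : b ∈ (⊥ : Submodule ℂ V) := htop ▸ Submodule.mem_top
    rw [Submodule.mem_bot] at ha hb2
    rw [ha, hb2]
  refine ⟨hne, hinv, ?_⟩
  intro U hUle hUinv
  by_cases hU : U = ⊥
  · exact Or.inl hU
  right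
  -- projection onto W x₀
  let e := LinearEquiv.ofBijective (DirectSum.coeLinearMap W) hinternal
  let π : V →ₗ[ℂ] V :=
    (W x₀).subtype ∘ₗ (DirectSum.component ℂ (G ⧸ H) (fun x => W x) x₀) ∘ₗ (e.symm : V →ₗ[ℂ] _)
  have hπ_mem : ∀ {v : V}, v ∈ W x₀ → π v = v := by
    intro v hv
    simp only [π, LinearMap.coe_comp, Function.comp_apply, Submodule.coe_subtype,
      LinearEquiv.coe_coe]
    rw [show (DirectSum.component ℂ (G ⧸ H) (fun x => W x) x₀) (e.symm v)
        = e.symm v x₀ from rfl]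
    rw [hinternal.ofBijective_coeLinearMap_of_mem hv]
  have hπ_ne : ∀ {y : G ⧸ H} {v : V}, y ≠ x₀ → v ∈ W y → π v = 0 := by
    intro y v hy hv
    simp only [π, LinearMap.coe_comp, Function.comp_apply, Submodule.coe_subtype,
      LinearEquiv.coe_coe]
    rw [show (DirectSum.component ℂ (G ⧸ H) (fun x => W x) x₀) (e.symm v)
        = e.symm v x₀ from rfl]
    rw [hinternal.ofBijective_coeLinearMap_of_mem_ne hy hv]
    rfl
  -- the G-span of U
  have hUmap : ∀ h : G, h ∈ H → U.map (ρ h) = U := by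
    intro h hh
    refine le_antisymm (hUinv h hh) ?_
    intro u hu
    have : ρ h⁻¹ u ∈ U := by
      have := hUinv h⁻¹ (inv_mem hh)
      exact this ⟨u, hu, rfl⟩
    refine ⟨ρ h⁻¹ u, this, ?_⟩
    have : ρ h (ρ h⁻¹ u) = ρ (h * h⁻¹) u := by rw [map_mul]; rfl
    rw [this, mul_inv_cancel, map_one]; rfl
  set U' : Submodule ℂ V := ⨆ g : G, U.map (ρ g) with hU'
  have hU'inv : ∀ g : G, U'.map (ρ g) ≤ U' := by
    intro g
    rw [hU', Submodule.map_iSup]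
    refine iSup_le fun g' => ?_
    rw [← Submodule.map_comp]
    have : (ρ g) ∘ₗ (ρ g') = ρ (g * g') := by rw [map_mul]; rfl
    rw [this]
    exact le_iSup (fun g : G => U.map (ρ g)) (g * g')
  have hU'ne : U' ≠ ⊥ := by
    intro hb
    apply hU
    have h1 : U ≤ U' := by
      rw [hU']
      intro u hu
      exact Submodule.mem_iSup_of_mem 1 ⟨u, hu, by simp⟩
    rw [hb, le_bot_iff] at h1
    exact h1
  have hU'top : U' = ⊤ := (hirr U' hU'inv).resolve_left hU'ne
  -- π maps U' into U
  have hπU' : ∀ v ∈ U', π v ∈ U := by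
    have : U' ≤ Submodule.comap π U := by
      rw [hU']
      refine iSup_le fun g => ?_
      rintro v ⟨u, hu, rfl⟩
      show π (ρ g u) ∈ U
      by_cases hg : g ∈ H
      · have hmem' : ρ g u ∈ U := hUinv g hg ⟨u, hu, rfl⟩
        rw [hπ_mem (hUle hmem')]
        exact hmem'
      · have hy : (g : G ⧸ H) ≠ x₀ := by
          rw [hx₀]
          intro hc
          exact hg (by simpa using inv_mem (QuotientGroup.eq.1 hc))
        have : ρ g u ∈ W ((g : G ⧸ H)) := by
          rw [← hsmul g, ← hgrade]
          exact ⟨u, hUle hu, rfl⟩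
        rw [hπ_ne hy this]
        exact U.zero_mem
    exact this
  -- conclude
  refine le_antisymm hUle ?_
  intro v hv
  have hvU' : v ∈ U' := by rw [hU'top]; trivial
  have := hπU' v hvU'
  rwa [hπ_mem hv] at this
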